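/- Let k be a real parameter with k² < 1. For all real numbers u, α, β, setting θ = (β−α)/2, the following identity of Jacobi elliptic functions holds: (1 + cn(θ|k)) · ( cn((u−β)/2 | k) − cn((u−α)/2 | k) ) = sn(θ|k) · ( sn((u−α)/2 | k)·dn((u−β)/2 | k) + sn((u−β)/2 | k)·dn((u−α)/2 | k) ). (This identity, a consequence of the addition formula for cn, is the key computation showing that the one-parameter family of functions g is in the kernel of the Kasteleyn operator of the Fisher graph of an isoradial graph.) -/

import Mathlib

open Real Filter

/-- Complete elliptic integral of the first kind `K`, as a function of the
squared modulus `m = k²`. -/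
noncomputable def ellK (m : ℝ) : ℝ :=
  ∫ τ in (0:ℝ)..(π/2), 1 / Real.sqrt (1 - m * Real.sin τ ^ 2)

/-- The incomplete elliptic integral of the first kind
`φ ↦ ∫₀^φ (1 - k² sin² t)^{-1/2} dt`, as a function of the squared modulus `m = k²`. -/
noncomputable def amF (m φ : ℝ) : ℝ :=
  ∫ t in (0:ℝ)..φ, 1 / Real.sqrt (1 - m * Real.sin t ^ 2)

/-- Jacobi's amplitude, the inverse of `amF m`, squared modulus `m = k²`. -/
noncomputable def am (m u : ℝ) : ℝ := Function.invFun (amF m) u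

/-- Jacobi elliptic function `sn`, squared modulus `m = k²`. -/
noncomputable def sn (u m : ℝ) : ℝ := Real.sin (am m u)

/-- Jacobi elliptic function `cn`, squared modulus `m = k²`. -/
noncomputable def cn (u m : ℝ) : ℝ := Real.cos (am m u)

/-- Jacobi elliptic function `dn`, squared modulus `m = k²`. -/
noncomputable def dn (u m : ℝ) : ℝ := Real.sqrt (1 - m * sn u m ^ 2)

/-- Jacobi elliptic function `sc = sn/cn`, squared modulus `m = k²`. -/
noncomputable def sc (u m : ℝ) : ℝ := sn u m / cn u m



lemma key_pos {m : ℝ} (hm0 : 0 ≤ m) (hm1 : m < 1) (t : ℝ) : 0 < 1 - m * Real.sin t ^ 2 := by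
  nlinarith [Real.sin_sq_le_one t, sq_nonneg (Real.sin t)]

lemma integrand_cont {m : ℝ} (hm0 : 0 ≤ m) (hm1 : m < 1) :
    Continuous (fun t : ℝ => 1 / Real.sqrt (1 - m * Real.sin t ^ 2)) := by
  apply Continuous.div continuous_const
  · exact (Real.continuous_sqrt).comp (by continuity)
  · intro t
    exact ne_of_gt (Real.sqrt_pos.2 (key_pos hm0 hm1 t))

lemma hasDerivAt_amF {m : ℝ} (hm0 : 0 ≤ m) (hm1 : m < 1) (φ : ℝ) :
    HasDerivAt (amF m) (1 / Real.sqrt (1 - m * Real.sin φ ^ 2)) φ := by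
  apply intervalIntegral.integral_hasDerivAt_right
  · exact ((integrand_cont hm0 hm1)).intervalIntegrable _ _
  · exact ((integrand_cont hm0 hm1)).stronglyMeasurableAtFilter _ _
  · exact (integrand_cont hm0 hm1).continuousAt

lemma integrand_ge_one {m : ℝ} (hm0 : 0 ≤ m) (hm1 : m < 1) (t : ℝ) :
    1 ≤ 1 / Real.sqrt (1 - m * Real.sin t ^ 2) := by
  rw [le_div_iff₀ (Real.sqrt_pos.2 (key_pos hm0 hm1 t)), one_mul]
  exact Real.sqrt_le_one.2 (by nlinarith [sq_nonneg (Real.sin t)])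

lemma amF_strictMono {m : ℝ} (hm0 : 0 ≤ m) (hm1 : m < 1) : StrictMono (amF m) := by
  have h : ∀ x : ℝ, HasDerivAt (amF m) (1 / Real.sqrt (1 - m * Real.sin x ^ 2)) x :=
    hasDerivAt_amF hm0 hm1
  apply strictMono_of_deriv_pos
  intro x
  rw [(h x).deriv]
  have := Real.sqrt_pos.2 (key_pos hm0 hm1 x)
  positivity

lemma amF_ge {m : ℝ} (hm0 : 0 ≤ m) (hm1 : m < 1) (φ : ℝ) (h : 0 ≤ φ) : φ ≤ amF m φ := by
  calc φ = ∫ t in (0:ℝ)..φ, (1:ℝ) := by simp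
  _ ≤ amF m φ := by
      apply intervalIntegral.integral_mono_on h (intervalIntegrable_const)
        ((integrand_cont hm0 hm1).intervalIntegrable _ _)
      intro t _
      exact integrand_ge_one hm0 hm1 t

lemma amF_neg (m φ : ℝ) : amF m (-φ) = - amF m φ := by
  unfold amF
  rw [intervalIntegral.integral_symm]
  have h : ∫ t in (-φ)..(0:ℝ), 1 / Real.sqrt (1 - m * Real.sin t ^ 2)
      = ∫ t in (0:ℝ)..φ, 1 / Real.sqrt (1 - m * Real.sin t ^ 2) := by
    rw [show (0:ℝ) = -0 by ring]
    rw [← intervalIntegral.integral_comp_neg (fun t => 1 / Real.sqrt (1 - m * Real.sin t ^ 2))]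
    simp
  rw [h]

lemma amF_surjective {m : ℝ} (hm0 : 0 ≤ m) (hm1 : m < 1) : Function.Surjective (amF m) := by
  have hd : Differentiable ℝ (amF m) := fun x => (hasDerivAt_amF hm0 hm1 x).differentiableAt
  have hc : Continuous (amF m) := hd.continuous
  apply Continuous.surjective hc
  · exact tendsto_atTop_mono' _ (eventually_atTop.2 ⟨0, fun φ h => amF_ge hm0 hm1 φ h⟩)
      tendsto_id
  · have h : ∀ᶠ φ in atBot, amF m φ ≤ φ := by
      filter_upwards [eventually_le_atBot (0:ℝ)] with φ h
      have h2 := amF_ge hm0 hm1 (-φ) (by linarith)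
      rw [amF_neg] at h2
      linarith
    exact tendsto_atBot_mono' _ h tendsto_id

lemma amF_am {m : ℝ} (hm0 : 0 ≤ m) (hm1 : m < 1) (u : ℝ) : amF m (am m u) = u :=
  Function.rightInverse_invFun (amF_surjective hm0 hm1) u

lemma am_amF {m : ℝ} (hm0 : 0 ≤ m) (hm1 : m < 1) (φ : ℝ) : am m (amF m φ) = φ :=
  Function.leftInverse_invFun (amF_strictMono hm0 hm1).injective φ

lemma am_continuous {m : ℝ} (hm0 : 0 ≤ m) (hm1 : m < 1) : Continuous (am m) := by
  have he : am m = ⇑(StrictMono.orderIsoOfSurjective (amF m) (amF_strictMono hm0 hm1)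
      (amF_surjective hm0 hm1)).symm := by
    funext u
    apply (amF_strictMono hm0 hm1).injective
    rw [amF_am hm0 hm1]
    exact (StrictMono.orderIsoOfSurjective_self_symm_apply _ _ _ u).symm
  rw [he]
  exact (StrictMono.orderIsoOfSurjective (amF m) (amF_strictMono hm0 hm1)
      (amF_surjective hm0 hm1)).symm.continuous

lemma hasDerivAt_am {m : ℝ} (hm0 : 0 ≤ m) (hm1 : m < 1) (u : ℝ) :
    HasDerivAt (am m) (Real.sqrt (1 - m * Real.sin (am m u) ^ 2)) u := by
  have hs := Real.sqrt_pos.2 (key_pos hm0 hm1 (am m u))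
  have h := HasDerivAt.of_local_left_inverse ((am_continuous hm0 hm1).continuousAt)
    (hasDerivAt_amF hm0 hm1 (am m u)) (by positivity)
    (Filter.Eventually.of_forall (amF_am hm0 hm1))
  refine h.congr_deriv (Eq.symm ?_)
  field_simp

lemma amF_zero (m : ℝ) : amF m 0 = 0 := by simp [amF]

lemma am_zero {m : ℝ} (hm0 : 0 ≤ m) (hm1 : m < 1) : am m 0 = 0 := by
  conv_lhs => rw [← amF_zero m]
  exact am_amF hm0 hm1 0

lemma am_neg {m : ℝ} (hm0 : 0 ≤ m) (hm1 : m < 1) (u : ℝ) : am m (-u) = - am m u := by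
  apply (amF_strictMono hm0 hm1).injective
  rw [amF_am hm0 hm1, amF_neg, amF_am hm0 hm1]

lemma sn_zero {m : ℝ} (hm0 : 0 ≤ m) (hm1 : m < 1) : sn 0 m = 0 := by
  simp [sn, am_zero hm0 hm1]

lemma cn_zero {m : ℝ} (hm0 : 0 ≤ m) (hm1 : m < 1) : cn 0 m = 1 := by
  simp [cn, am_zero hm0 hm1]

lemma dn_zero {m : ℝ} (hm0 : 0 ≤ m) (hm1 : m < 1) : dn 0 m = 1 := by
  simp [dn, sn_zero hm0 hm1]

lemma sn_neg {m : ℝ} (hm0 : 0 ≤ m) (hm1 : m < 1) (u : ℝ) : sn (-u) m = - sn u m := by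
  simp [sn, am_neg hm0 hm1]

lemma cn_neg {m : ℝ} (hm0 : 0 ≤ m) (hm1 : m < 1) (u : ℝ) : cn (-u) m = cn u m := by
  simp [cn, am_neg hm0 hm1]

lemma dn_neg {m : ℝ} (hm0 : 0 ≤ m) (hm1 : m < 1) (u : ℝ) : dn (-u) m = dn u m := by
  simp [dn, sn_neg hm0 hm1]

lemma key_pos' {m : ℝ} (hm0 : 0 ≤ m) (hm1 : m < 1) (u : ℝ) : 0 < 1 - m * sn u m ^ 2 :=
  key_pos hm0 hm1 (am m u)

lemma dn_pos {m : ℝ} (hm0 : 0 ≤ m) (hm1 : m < 1) (u : ℝ) : 0 < dn u m :=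
  Real.sqrt_pos.2 (key_pos' hm0 hm1 u)

lemma dn_sq {m : ℝ} (hm0 : 0 ≤ m) (hm1 : m < 1) (u : ℝ) : dn u m ^ 2 = 1 - m * sn u m ^ 2 :=
  Real.sq_sqrt (le_of_lt (key_pos' hm0 hm1 u))

lemma sn_sq_add_cn_sq (m u : ℝ) : sn u m ^ 2 + cn u m ^ 2 = 1 :=
  Real.sin_sq_add_cos_sq (am m u)

lemma hasDerivAt_sn {m : ℝ} (hm0 : 0 ≤ m) (hm1 : m < 1) (u : ℝ) :
    HasDerivAt (fun v => sn v m) (cn u m * dn u m) u := by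
  have h := (Real.hasDerivAt_sin (am m u)).comp u (hasDerivAt_am hm0 hm1 u)
  exact h.congr_deriv rfl

lemma hasDerivAt_cn {m : ℝ} (hm0 : 0 ≤ m) (hm1 : m < 1) (u : ℝ) :
    HasDerivAt (fun v => cn v m) (-(sn u m * dn u m)) u := by
  have h := (Real.hasDerivAt_cos (am m u)).comp u (hasDerivAt_am hm0 hm1 u)
  refine h.congr_deriv (Eq.symm ?_)
  simp only [cn, dn, sn]
  ring

lemma hasDerivAt_dn {m : ℝ} (hm0 : 0 ≤ m) (hm1 : m < 1) (u : ℝ) :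
    HasDerivAt (fun v => dn v m) (-(m * sn u m * cn u m)) u := by
  have hg : HasDerivAt (fun v => 1 - m * sn v m ^ 2)
      (-(m * (2 * sn u m * (cn u m * dn u m)))) u := by
    have h1 := ((hasDerivAt_sn hm0 hm1 u).pow 2).const_mul m
    have h2 := (h1).const_sub 1
    refine h2.congr_deriv (Eq.symm ?_)
    ring
  have hs := Real.hasDerivAt_sqrt (ne_of_gt (key_pos' hm0 hm1 u))
  have h := hs.comp u hg
  have hdn := dn_pos hm0 hm1 u
  refine h.congr_deriv (Eq.symm ?_)
  have : Real.sqrt (1 - m * sn u m ^ 2) = dn u m := rfl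
  rw [this]
  field_simp

lemma sn_sq_le_one (m u : ℝ) : sn u m ^ 2 ≤ 1 := Real.sin_sq_le_one (am m u)

lemma delta_pos {m : ℝ} (hm0 : 0 ≤ m) (hm1 : m < 1) (x y : ℝ) :
    0 < 1 - m * sn x m ^ 2 * sn y m ^ 2 := by
  have h3 : sn x m ^ 2 * sn y m ^ 2 ≤ 1 :=
    mul_le_one₀ (sn_sq_le_one m x) (sq_nonneg _) (sn_sq_le_one m y)
  nlinarith [mul_nonneg (sq_nonneg (sn x m)) (sq_nonneg (sn y m))]

lemma hasDerivAt_sn_comp {m : ℝ} (hm0 : 0 ≤ m) (hm1 : m < 1) (s x : ℝ) :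
    HasDerivAt (fun v => sn (s - v) m) (-(cn (s - x) m * dn (s - x) m)) x := by
  have h := (hasDerivAt_sn hm0 hm1 (s - x)).comp x ((hasDerivAt_id x).const_sub s)
  refine h.congr_deriv (Eq.symm ?_); ring

lemma hasDerivAt_cn_comp {m : ℝ} (hm0 : 0 ≤ m) (hm1 : m < 1) (s x : ℝ) :
    HasDerivAt (fun v => cn (s - v) m) (sn (s - x) m * dn (s - x) m) x := by
  have h := (hasDerivAt_cn hm0 hm1 (s - x)).comp x ((hasDerivAt_id x).const_sub s)
  refine h.congr_deriv (Eq.symm ?_); ring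

lemma hasDerivAt_dn_comp {m : ℝ} (hm0 : 0 ≤ m) (hm1 : m < 1) (s x : ℝ) :
    HasDerivAt (fun v => dn (s - v) m) (m * sn (s - x) m * cn (s - x) m) x := by
  have h := (hasDerivAt_dn hm0 hm1 (s - x)).comp x ((hasDerivAt_id x).const_sub s)
  refine h.congr_deriv (Eq.symm ?_); ring

lemma sn_addition {m : ℝ} (hm0 : 0 ≤ m) (hm1 : m < 1) (s x : ℝ) :
    sn s m * (1 - m * sn x m ^ 2 * sn (s - x) m ^ 2)
      = sn x m * cn (s - x) m * dn (s - x) m + sn (s - x) m * cn x m * dn x m := by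
  set f : ℝ → ℝ := fun x => (sn x m * cn (s - x) m * dn (s - x) m
      + sn (s - x) m * cn x m * dn x m) / (1 - m * sn x m ^ 2 * sn (s - x) m ^ 2) with hf
  have hD : ∀ x : ℝ, (1 - m * sn x m ^ 2 * sn (s - x) m ^ 2) ≠ 0 :=
    fun x => ne_of_gt (delta_pos hm0 hm1 x (s - x))
  have hder : ∀ x : ℝ, HasDerivAt f 0 x := by
    intro x
    have hN := (((hasDerivAt_sn hm0 hm1 x).mul (hasDerivAt_cn_comp hm0 hm1 s x)).mul
        (hasDerivAt_dn_comp hm0 hm1 s x)).add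
      (((hasDerivAt_sn_comp hm0 hm1 s x).mul (hasDerivAt_cn hm0 hm1 x)).mul
        (hasDerivAt_dn hm0 hm1 x))
    have hDd := ((((hasDerivAt_sn hm0 hm1 x).pow 2).const_mul m).mul
        ((hasDerivAt_sn_comp hm0 hm1 s x).pow 2)).const_sub 1
    have hF := hN.div hDd (hD x)
    refine hF.congr_deriv (Eq.symm ?_)
    rw [eq_comm, div_eq_zero_iff]
    left
    simp only [Pi.mul_apply, Pi.pow_apply, Pi.add_apply, Pi.sub_apply]
    have hcx : cn x m ^ 2 = 1 - sn x m ^ 2 := by linarith [sn_sq_add_cn_sq m x]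
    have hcy : cn (s - x) m ^ 2 = 1 - sn (s - x) m ^ 2 := by linarith [sn_sq_add_cn_sq m (s - x)]
    have hdx := dn_sq hm0 hm1 x
    have hdy := dn_sq hm0 hm1 (s - x)
    linear_combination ((-1:ℝ)*m*(sn x m)*(sn (s-x) m) + (2:ℝ)*m*(sn x m)*(dn x m)^2*(sn (s-x) m)^3 + (1:ℝ)*m^2*(sn x m)^3*(sn (s-x) m)^3)*hcx + ((1:ℝ)*m*(sn x m)*(sn (s-x) m) + (-2:ℝ)*m*(sn x m)^3*(sn (s-x) m)*(dn (s-x) m)^2 + (-1:ℝ)*m^2*(sn x m)^3*(sn (s-x) m)^3)*hcy + ((-1:ℝ)*(sn x m)*(sn (s-x) m) + (2:ℝ)*m*(sn x m)*(sn (s-x) m)^3 + (-1:ℝ)*m*(sn x m)^3*(sn (s-x) m)^3)*hdx + ((1:ℝ)*(sn x m)*(sn (s-x) m) + (-2:ℝ)*m*(sn x m)^3*(sn (s-x) m) + (1:ℝ)*m*(sn x m)^3*(sn (s-x) m)^3)*hdy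
  have hdiff : Differentiable ℝ f := fun x => (hder x).differentiableAt
  have hconst := is_const_of_deriv_eq_zero hdiff (fun x => (hder x).deriv) x s
  have hfs : f s = sn s m := by
    rw [hf]
    simp only [sub_self, sn_zero hm0 hm1, cn_zero hm0 hm1, dn_zero hm0 hm1]
    norm_num
  have hfx : f x = sn s m := by rw [hconst, hfs]
  rw [hf] at hfx
  rw [div_eq_iff (hD x)] at hfx
  linarith [hfx]

lemma cn_addition {m : ℝ} (hm0 : 0 ≤ m) (hm1 : m < 1) (s x : ℝ) :
    cn s m * (1 - m * sn x m ^ 2 * sn (s - x) m ^ 2)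
      = cn x m * cn (s - x) m - sn x m * sn (s - x) m * dn x m * dn (s - x) m := by
  set f : ℝ → ℝ := fun x => (cn x m * cn (s - x) m
      - sn x m * sn (s - x) m * dn x m * dn (s - x) m)
      / (1 - m * sn x m ^ 2 * sn (s - x) m ^ 2) with hf
  have hD : ∀ x : ℝ, (1 - m * sn x m ^ 2 * sn (s - x) m ^ 2) ≠ 0 :=
    fun x => ne_of_gt (delta_pos hm0 hm1 x (s - x))
  have hder : ∀ x : ℝ, HasDerivAt f 0 x := by
    intro x
    have hN := ((hasDerivAt_cn hm0 hm1 x).mul (hasDerivAt_cn_comp hm0 hm1 s x)).sub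
      ((((hasDerivAt_sn hm0 hm1 x).mul (hasDerivAt_sn_comp hm0 hm1 s x)).mul
        (hasDerivAt_dn hm0 hm1 x)).mul (hasDerivAt_dn_comp hm0 hm1 s x))
    have hDd := ((((hasDerivAt_sn hm0 hm1 x).pow 2).const_mul m).mul
        ((hasDerivAt_sn_comp hm0 hm1 s x).pow 2)).const_sub 1
    have hF := hN.div hDd (hD x)
    refine hF.congr_deriv (Eq.symm ?_)
    rw [eq_comm, div_eq_zero_iff]
    left
    simp only [Pi.mul_apply, Pi.pow_apply, Pi.add_apply, Pi.sub_apply]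
    have hcx : cn x m ^ 2 = 1 - sn x m ^ 2 := by linarith [sn_sq_add_cn_sq m x]
    have hcy : cn (s - x) m ^ 2 = 1 - sn (s - x) m ^ 2 := by linarith [sn_sq_add_cn_sq m (s - x)]
    have hdx := dn_sq hm0 hm1 x
    have hdy := dn_sq hm0 hm1 (s - x)
    linear_combination ((2:ℝ)*m*(sn x m)*(dn x m)*(sn (s-x) m)^2*(cn (s-x) m))*hcx + ((-2:ℝ)*m*(sn x m)^2*(cn x m)*(sn (s-x) m)*(dn (s-x) m))*hcy + ((-1:ℝ)*(cn x m)*(sn (s-x) m)*(dn (s-x) m) + (-1:ℝ)*m*(sn x m)^2*(cn x m)*(sn (s-x) m)^3*(dn (s-x) m))*hdx + ((1:ℝ)*(sn x m)*(dn x m)*(cn (s-x) m) + (1:ℝ)*m*(sn x m)^3*(dn x m)*(sn (s-x) m)^2*(cn (s-x) m))*hdy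
  have hdiff : Differentiable ℝ f := fun x => (hder x).differentiableAt
  have hconst := is_const_of_deriv_eq_zero hdiff (fun x => (hder x).deriv) x s
  have hfs : f s = cn s m := by
    rw [hf]
    simp only [sub_self, sn_zero hm0 hm1, cn_zero hm0 hm1, dn_zero hm0 hm1]
    norm_num
  have hfx : f x = cn s m := by rw [hconst, hfs]
  rw [hf] at hfx
  rw [div_eq_iff (hD x)] at hfx
  linarith [hfx]

lemma sn_sub {m : ℝ} (hm0 : 0 ≤ m) (hm1 : m < 1) (x y : ℝ) :
    sn (x - y) m * (1 - m * sn x m ^ 2 * sn y m ^ 2)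
      = sn x m * cn y m * dn y m - sn y m * cn x m * dn x m := by
  have h := sn_addition hm0 hm1 (x - y) x
  rw [show x - y - x = -y by ring, sn_neg hm0 hm1, cn_neg hm0 hm1, dn_neg hm0 hm1] at h
  linear_combination h

lemma cn_sub {m : ℝ} (hm0 : 0 ≤ m) (hm1 : m < 1) (x y : ℝ) :
    cn (x - y) m * (1 - m * sn x m ^ 2 * sn y m ^ 2)
      = cn x m * cn y m + sn x m * sn y m * dn x m * dn y m := by
  have h := cn_addition hm0 hm1 (x - y) x
  rw [show x - y - x = -y by ring, sn_neg hm0 hm1, cn_neg hm0 hm1, dn_neg hm0 hm1] at h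
  linear_combination h

/-- The key addition-formula identity behind the kernel property of the functions `g`
for the Kasteleyn operator on the Fisher graph: with `θ = (β-α)/2`,
`(1 + cn θ)(cn((u-β)/2) - cn((u-α)/2))
  = sn θ (sn((u-α)/2) dn((u-β)/2) + sn((u-β)/2) dn((u-α)/2))`. -/
theorem fisher_kernel_identity (k : ℝ) (hk : k ^ 2 < 1) (u α β : ℝ) :
    (1 + cn ((β - α) / 2) (k ^ 2)) *
        (cn ((u - β) / 2) (k ^ 2) - cn ((u - α) / 2) (k ^ 2))
      = sn ((β - α) / 2) (k ^ 2) *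
          (sn ((u - α) / 2) (k ^ 2) * dn ((u - β) / 2) (k ^ 2) +
            sn ((u - β) / 2) (k ^ 2) * dn ((u - α) / 2) (k ^ 2)) := by
  have hm0 : (0:ℝ) ≤ k ^ 2 := sq_nonneg k
  have hm1 : k ^ 2 < 1 := hk
  set x := (u - α) / 2 with hx
  set y := (u - β) / 2 with hy
  have hθ : (β - α) / 2 = x - y := by rw [hx, hy]; ring
  rw [hθ]
  set sx := sn x (k^2)
  set cX := cn x (k^2)
  set dX := dn x (k^2)
  set sy := sn y (k^2)
  set cY := cn y (k^2)
  set dY := dn y (k^2)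
  have hΔ : (1 - k^2 * sx ^ 2 * sy ^ 2) ≠ 0 := ne_of_gt (delta_pos hm0 hm1 x y)
  have hsn := sn_sub hm0 hm1 x y
  have hcn := cn_sub hm0 hm1 x y
  have hcx : cX ^ 2 = 1 - sx ^ 2 := by
    have := sn_sq_add_cn_sq (k^2) x; linarith
  have hcy : cY ^ 2 = 1 - sy ^ 2 := by
    have := sn_sq_add_cn_sq (k^2) y; linarith
  have hdx : dX ^ 2 = 1 - k^2 * sx ^ 2 := dn_sq hm0 hm1 x
  have hdy : dY ^ 2 = 1 - k^2 * sy ^ 2 := dn_sq hm0 hm1 y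
  refine mul_right_cancel₀ hΔ ?_
  linear_combination (cY - cX) * hcn - (sx*dY + sy*dX) * hsn +
    ((-1:ℝ)*cY)*hcx + ((1:ℝ)*cX)*hcy + ((1:ℝ)*cX*sy^2)*hdx + ((-1:ℝ)*sx^2*cY)*hdy
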